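/- Let p be a prime number and let G = C_p × C_p be the rank two elementary Abelian group (e.g., G = ZMod p × ZMod p). Then the number of transfer systems on the subgroup lattice of G (equivalently, the number of G-transfer systems, since G is abelian so closure under conjugation is automatic) is exactly 2^{p+2} + p + 1. -/
import Mathlib

structure TransferSystem (P : Type*) [Lattice P] where
  rel : P → P → Prop
  refl : ∀ x, rel x x
  trans : ∀ x y z, rel x y → rel y z → rel x z
  le_of_rel : ∀ x y, rel x y → x ≤ y
  restrict : ∀ x y z, rel x z → y ≤ z → rel (x ⊓ y) y

theorem TransferSystem.ext' {P : Type*} [Lattice P] {R S : TransferSystem P}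
    (h : R.rel = S.rel) : R = S := by
  cases R; cases S; simpa using h

section Abstract

variable {L : Type*} [Lattice L] [OrderBot L] [OrderTop L]

/-- condition on the data (t, A, B) encoding a transfer system on a height-2 lattice -/
def TSCond {α : Type*} (t : Prop) (A B : Set α) : Prop :=
  (t → A = Set.univ) ∧ (∀ a ∈ B, ∀ b, b ≠ a → b ∈ A) ∧ (∀ a ∈ A, a ∈ B → t)

theorem atom_inf_eq_bot {a b : L} (ha : IsAtom a) (hb : IsAtom b) (h : a ≠ b) :
    a ⊓ b = ⊥ := disjoint_iff.mp (ha.disjoint_of_ne hb h)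

theorem le_atom_cases {a y : L} (ha : IsAtom a) (h : y ≤ a) : y = ⊥ ∨ y = a := by
  rcases lt_or_eq_of_le h with h | h
  · exact Or.inl (ha.2 _ h)
  · exact Or.inr h

variable (hclass : ∀ x : L, x = ⊥ ∨ IsAtom x ∨ x = ⊤)
  (htop : ¬ IsAtom (⊤ : L)) (hbot : (⊥ : L) ≠ ⊤)

/-- the transfer system built from data (t, A, B) -/
noncomputable def mkTS (t : Prop) (A B : Set {a : L // IsAtom a}) (hc : TSCond t A B) :
    TransferSystem L where
  rel x y := x = y ∨ (x = ⊥ ∧ y = ⊤ ∧ t) ∨ (x = ⊥ ∧ ∃ h : IsAtom y, (⟨y, h⟩ : {a : L // IsAtom a}) ∈ A)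
    ∨ (∃ h : IsAtom x, (⟨x, h⟩ : {a : L // IsAtom a}) ∈ B ∧ y = ⊤)
  refl x := Or.inl rfl
  trans := by
    rintro x y z (rfl | ⟨rfl, rfl, ht⟩ | ⟨rfl, hy, hA⟩ | ⟨hx, hB, rfl⟩) h2
    · exact h2
    · rcases h2 with rfl | ⟨h, _⟩ | ⟨h, _⟩ | ⟨h, _⟩
      · exact Or.inr (Or.inl ⟨rfl, rfl, ht⟩)
      · exact absurd h.symm hbot
      · exact absurd h.symm hbot
      · exact absurd h htop
    · rcases h2 with rfl | ⟨h, rfl, _⟩ | ⟨h, _⟩ | ⟨h, hB, rfl⟩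
      · exact Or.inr (Or.inr (Or.inl ⟨rfl, hy, hA⟩))
      · exact absurd h.symm hy.1.symm  -- y = ⊥ contradicts atom
      · exact absurd h.symm hy.1.symm
      · exact Or.inr (Or.inl ⟨rfl, rfl, hc.2.2 _ hA hB⟩)
    · rcases h2 with rfl | ⟨h, _⟩ | ⟨h, _⟩ | ⟨h, _⟩
      · exact Or.inr (Or.inr (Or.inr ⟨hx, hB, rfl⟩))
      · exact absurd h.symm hbot
      · exact absurd h.symm hbot
      · exact absurd h htop
  le_of_rel := by
    rintro x y (rfl | ⟨rfl, rfl, _⟩ | ⟨rfl, _⟩ | ⟨_, _, rfl⟩)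
    · exact le_rfl
    · exact bot_le
    · exact bot_le
    · exact le_top
  restrict := by
    rintro x y z (rfl | ⟨rfl, rfl, ht⟩ | ⟨rfl, hz, hA⟩ | ⟨hx, hB, rfl⟩) hyz
    · rw [inf_eq_right.mpr hyz]; exact Or.inl rfl
    · rw [bot_inf_eq]
      rcases hclass y with rfl | hy | rfl
      · exact Or.inl rfl
      · refine Or.inr (Or.inr (Or.inl ⟨rfl, hy, ?_⟩))
        rw [hc.1 ht]; trivial
      · exact Or.inr (Or.inl ⟨rfl, rfl, ht⟩)
    · rw [bot_inf_eq]
      rcases le_atom_cases hz hyz with rfl | rfl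
      · exact Or.inl rfl
      · exact Or.inr (Or.inr (Or.inl ⟨rfl, hz, hA⟩))
    · rcases hclass y with rfl | hy | rfl
      · rw [inf_bot_eq]; exact Or.inl rfl
      · by_cases hxy : x = y
        · subst hxy; rw [inf_idem]; exact Or.inl rfl
        · rw [atom_inf_eq_bot hx hy hxy]
          refine Or.inr (Or.inr (Or.inl ⟨rfl, hy, ?_⟩))
          exact hc.2.1 _ hB _ (by simp [Subtype.ext_iff, Ne.symm hxy])
      · rw [inf_top_eq]; exact Or.inr (Or.inr (Or.inr ⟨hx, hB, rfl⟩))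

theorem mkTS_rel (t : Prop) (A B : Set {a : L // IsAtom a}) (hc : TSCond t A B) (x y : L) :
    (mkTS hclass htop hbot t A B hc).rel x y ↔ (x = y ∨ (x = ⊥ ∧ y = ⊤ ∧ t) ∨
      (x = ⊥ ∧ ∃ h : IsAtom y, (⟨y, h⟩ : {a : L // IsAtom a}) ∈ A)
      ∨ (∃ h : IsAtom x, (⟨x, h⟩ : {a : L // IsAtom a}) ∈ B ∧ y = ⊤)) := Iff.rfl

/-- the equivalence between transfer systems and admissible data -/
noncomputable def tsEquiv :
    TransferSystem L ≃ {x : Prop × Set {a : L // IsAtom a} × Set {a : L // IsAtom a} //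
      TSCond x.1 x.2.1 x.2.2} where
  toFun R := ⟨(R.rel ⊥ ⊤, {a | R.rel ⊥ a.1}, {a | R.rel a.1 ⊤}), by
    refine ⟨fun ht => ?_, fun a ha b hba => ?_, fun a hA hB => ?_⟩
    · ext a
      simp only [Set.mem_setOf_eq, Set.mem_univ, iff_true]
      have := R.restrict ⊥ a.1 ⊤ ht le_top
      rwa [bot_inf_eq] at this
    · have := R.restrict a.1 b.1 ⊤ ha le_top
      rwa [atom_inf_eq_bot a.2 b.2 (fun h => hba (Subtype.ext h).symm)] at this
    · exact R.trans _ _ _ hA hB⟩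
  invFun s := mkTS hclass htop hbot s.1.1 s.1.2.1 s.1.2.2 s.2
  left_inv R := by
    apply TransferSystem.ext'
    funext x y
    apply propext
    rw [mkTS_rel]
    constructor
    · rintro (rfl | ⟨rfl, rfl, ht⟩ | ⟨rfl, hy, hA⟩ | ⟨hx, hB, rfl⟩)
      · exact R.refl x
      · exact ht
      · exact hA
      · exact hB
    · intro h
      have hxy := R.le_of_rel _ _ h
      rcases hclass x with rfl | hx | rfl
      · rcases hclass y with rfl | hy | rfl
        · exact Or.inl rfl
        · exact Or.inr (Or.inr (Or.inl ⟨rfl, hy, h⟩))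
        · exact Or.inr (Or.inl ⟨rfl, rfl, h⟩)
      · rcases hclass y with rfl | hy | rfl
        · exact absurd (le_bot_iff.mp hxy) hx.1
        · rcases le_atom_cases hy hxy with rfl | rfl
          · exact absurd rfl hx.1
          · exact Or.inl rfl
        · exact Or.inr (Or.inr (Or.inr ⟨hx, h, rfl⟩))
      · rcases hclass y with rfl | hy | rfl
        · exact absurd (le_bot_iff.mp hxy) hbot.symm
        · exact absurd (top_le_iff.mp hxy ▸ hy) htop
        · exact Or.inl rfl
  right_inv s := by
    obtain ⟨⟨t, A, B⟩, hc⟩ := s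
    apply Subtype.ext
    refine Prod.ext ?_ (Prod.ext ?_ ?_)
    · dsimp only
      apply propext
      rw [mkTS_rel]
      constructor
      · rintro (h | ⟨_, _, ht⟩ | ⟨_, h, _⟩ | ⟨h, _⟩)
        · exact absurd h hbot
        · exact ht
        · exact absurd h htop
        · exact absurd rfl h.1
      · exact fun ht => Or.inr (Or.inl ⟨rfl, rfl, ht⟩)
    · dsimp only
      ext a
      simp only [Set.mem_setOf_eq]
      rw [mkTS_rel]
      constructor
      · rintro (h | ⟨_, h, _⟩ | ⟨_, h, hA⟩ | ⟨h, _⟩)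
        · exact absurd h.symm a.2.1
        · exact absurd (h ▸ a.2) htop
        · exact hA
        · exact absurd rfl h.1
      · exact fun hA => Or.inr (Or.inr (Or.inl ⟨rfl, a.2, hA⟩))
    · dsimp only
      ext a
      simp only [Set.mem_setOf_eq]
      rw [mkTS_rel]
      constructor
      · rintro (h | ⟨h, _⟩ | ⟨h, _⟩ | ⟨_, hB, _⟩)
        · exact absurd (h ▸ a.2) htop
        · exact absurd h a.2.1
        · exact absurd h a.2.1
        · exact hB
      · exact fun hB => Or.inr (Or.inr (Or.inr ⟨a.2, hB, rfl⟩))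

/-- the admissible data is equivalent to a sum type -/
noncomputable def dataEquiv (α : Type*) :
    {x : Prop × Set α × Set α // TSCond x.1 x.2.1 x.2.2} ≃ (Set α ⊕ Set α ⊕ α) where
  toFun s :=
    letI : Decidable s.1.1 := Classical.propDecidable _
    letI : Decidable (∃ a, a ∈ s.1.2.2) := Classical.propDecidable _
    if ht : s.1.1 then Sum.inl s.1.2.2
    else if hB : ∃ a, a ∈ s.1.2.2 then Sum.inr (Sum.inr hB.choose)
    else Sum.inr (Sum.inl s.1.2.1)
  invFun x := match x with
    | Sum.inl B => ⟨(True, Set.univ, B), fun _ => rfl, fun _ _ b _ => trivial,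
        fun _ _ _ => trivial⟩
    | Sum.inr (Sum.inl A) => ⟨(False, A, ∅), fun h => h.elim, fun a ha => ha.elim,
        fun _ _ h => h.elim⟩
    | Sum.inr (Sum.inr a) => ⟨(False, Set.univ \ {a}, {a}), fun h => h.elim,
        by rintro b rfl c hc; exact ⟨trivial, hc⟩,
        by rintro b hb rfl; exact absurd rfl hb.2⟩
  left_inv := by
    rintro ⟨⟨t, A, B⟩, hc⟩
    dsimp only
    by_cases ht : t
    · rw [dif_pos ht]
      refine Subtype.ext (Prod.ext (eq_true ht).symm (Prod.ext ?_ rfl))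
      exact (hc.1 ht).symm
    · rw [dif_neg ht]
      by_cases hB : ∃ a, a ∈ B
      · rw [dif_pos hB]
        have ha : hB.choose ∈ B := hB.choose_spec
        refine Subtype.ext (Prod.ext (eq_false ht).symm (Prod.ext ?_ ?_))
        · ext b
          simp only [Set.mem_diff, Set.mem_univ, true_and, Set.mem_singleton_iff]
          constructor
          · intro hb
            exact hc.2.1 _ ha _ hb
          · intro hbA
            rintro rfl
            exact ht (hc.2.2 _ hbA ha)
        · ext b
          simp only [Set.mem_singleton_iff]
          constructor
          · rintro rfl; exact ha
          · intro hb
            by_contra hne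
            exact ht (hc.2.2 _ (hc.2.1 _ ha _ hne) hb)
      · rw [dif_neg hB]
        refine Subtype.ext (Prod.ext (eq_false ht).symm (Prod.ext rfl ?_))
        exact (Set.eq_empty_iff_forall_notMem.mpr (fun a ha => hB ⟨a, ha⟩)).symm
  right_inv := by
    rintro (B | A | a)
    · exact dif_pos trivial
    · dsimp only
      rw [dif_neg (fun h => h), dif_neg (by rintro ⟨a, ha⟩; exact ha)]
    · dsimp only
      have hB0 : ∃ b, b ∈ ({a} : Set α) := ⟨a, rfl⟩
      rw [dif_neg (fun h => h), dif_pos hB0]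
      exact congrArg _ (congrArg _ hB0.choose_spec)

include hclass htop hbot in
theorem count_height2 [Finite L] :
    Nat.card (TransferSystem L) =
      2 ^ (Nat.card {a : L // IsAtom a} + 1) + Nat.card {a : L // IsAtom a} := by
  classical
  have e := (tsEquiv hclass htop hbot).trans (dataEquiv {a : L // IsAtom a})
  rw [Nat.card_congr e]
  cases nonempty_fintype {a : L // IsAtom a}
  simp only [Nat.card_eq_fintype_card, Fintype.card_sum, Fintype.card_set]
  ring

end Abstract

section Concrete
variable (p : ℕ) [Fact p.Prime]

local notation "G" => (ZMod p × ZMod p)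

theorem cardG : Nat.card G = p ^ 2 := by
  simp [Nat.card_eq_fintype_card, ZMod.card, sq]

theorem card_dvd' (H : AddSubgroup G) : Nat.card H ∣ p ^ 2 := by
  have := AddSubgroup.card_dvd_of_le (le_top (a := H))
  rwa [Nat.card_congr (AddSubgroup.topEquiv.toEquiv), cardG] at this

theorem order_eq {x : G} (hx : x ≠ 0) : addOrderOf x = p := by
  have hd : addOrderOf x ∣ p := by
    apply addOrderOf_dvd_of_nsmul_eq_zero
    have : ∀ a : ZMod p, p • a = 0 := fun a => by
      rw [nsmul_eq_mul, ZMod.natCast_self, zero_mul]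
    rw [Prod.smul_def, this, this]; rfl
  rcases (Nat.Prime.eq_one_or_self_of_dvd (Fact.out) _ hd) with h | h
  · exact absurd (AddMonoid.addOrderOf_eq_one_iff.mp h) hx
  · exact h

theorem card_zmul {x : G} (hx : x ≠ 0) : Nat.card (AddSubgroup.zmultiples x) = p := by
  rw [Nat.card_zmultiples, order_eq p hx]

theorem card_classify (H : AddSubgroup G) :
    Nat.card H = 1 ∨ Nat.card H = p ∨ Nat.card H = p ^ 2 := by
  obtain ⟨i, hi, h⟩ := (Nat.dvd_prime_pow Fact.out).mp (card_dvd' p H)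
  interval_cases i
  · left; simpa using h
  · right; left; simpa using h
  · right; right; exact h

theorem one_lt_p : 1 < p := (Fact.out : p.Prime).one_lt

theorem htop' : ¬ IsAtom (⊤ : AddSubgroup G) := by
  intro h
  have h10 : ((1 : ZMod p), (0 : ZMod p)) ≠ 0 := by
    simp [Prod.ext_iff]
  have hM := card_zmul p h10
  have hne : AddSubgroup.zmultiples ((1 : ZMod p), (0 : ZMod p)) ≠ ⊤ := by
    intro he
    rw [he, Nat.card_congr (AddSubgroup.topEquiv.toEquiv), cardG] at hM
    nlinarith [one_lt_p p]
  have := h.2 _ (lt_of_le_of_ne le_top hne)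
  rw [AddSubgroup.zmultiples_eq_bot] at this
  exact h10 this

theorem hbot' : (⊥ : AddSubgroup G) ≠ ⊤ := by
  intro h
  have : Nat.card (⊥ : AddSubgroup G) = 1 := by simp
  rw [h, Nat.card_congr (AddSubgroup.topEquiv.toEquiv), cardG] at this
  nlinarith [one_lt_p p]

theorem atom_iff_card (H : AddSubgroup G) : IsAtom H ↔ Nat.card H = p := by
  constructor
  · intro h
    rcases card_classify p H with h1 | h1 | h1
    · exact absurd (AddSubgroup.card_eq_one.mp h1) h.1
    · exact h1
    · exfalso
      apply htop' p
      have ht : H = ⊤ := AddSubgroup.eq_top_of_card_eq _ (by rw [h1, cardG])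
      rwa [ht] at h
  · intro h
    constructor
    · intro hb
      rw [hb] at h; simp at h
      have := one_lt_p p; omega
    · intro K hK
      have hle := AddSubgroup.card_dvd_of_le hK.le
      rw [h] at hle
      rcases (Nat.Prime.eq_one_or_self_of_dvd (Fact.out) _ hle) with h1 | h1
      · exact AddSubgroup.card_eq_one.mp h1
      · exact absurd (AddSubgroup.eq_of_le_of_card_ge hK.le (le_of_eq (h.trans h1.symm))) hK.ne

theorem hclass' (H : AddSubgroup G) : H = ⊥ ∨ IsAtom H ∨ H = ⊤ := by
  rcases card_classify p H with h | h | h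
  · exact Or.inl (AddSubgroup.card_eq_one.mp h)
  · exact Or.inr (Or.inl ((atom_iff_card p H).mpr h))
  · exact Or.inr (Or.inr (AddSubgroup.eq_top_of_card_eq _ (by rw [h, cardG])))

theorem zsmul_pair (n : ℤ) (a b : ZMod p) :
    n • ((a, b) : G) = ((n : ZMod p) * a, (n : ZMod p) * b) := by
  rw [Prod.smul_def]
  simp [zsmul_eq_mul]

theorem cast_val_int (a : ZMod p) : (((a.val : ℤ)) : ZMod p) = a := by
  simp

/-- lines in the plane -/
def lineMap : Option (ZMod p) → AddSubgroup G
  | none => AddSubgroup.zmultiples ((0 : ZMod p), (1 : ZMod p))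
  | some t => AddSubgroup.zmultiples ((1 : ZMod p), t)

theorem lineMap_atom (o : Option (ZMod p)) : IsAtom (lineMap p o) := by
  rw [atom_iff_card]
  cases o <;> exact card_zmul p (by simp [Prod.ext_iff])

theorem lineMap_inj : Function.Injective (lineMap p) := by
  have key : ∀ (t s : ZMod p) (c : ZMod p), ((1 : ZMod p), s) ∈ lineMap p (some t) → s = t := by
    intro t s c h
    rw [lineMap, AddSubgroup.mem_zmultiples_iff] at h
    obtain ⟨n, hn⟩ := h
    rw [zsmul_pair] at hn
    have h1 : ((n : ZMod p)) * 1 = 1 := congrArg Prod.fst hn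
    have h2 : ((n : ZMod p)) * t = s := congrArg Prod.snd hn
    rw [mul_one] at h1
    rw [h1, one_mul] at h2
    exact h2.symm
  rintro (_ | t) (_ | s) h
  · rfl
  · exfalso
    have : ((1 : ZMod p), s) ∈ lineMap p none := by
      rw [h]; exact AddSubgroup.mem_zmultiples _
    rw [lineMap, AddSubgroup.mem_zmultiples_iff] at this
    obtain ⟨n, hn⟩ := this
    rw [zsmul_pair, Prod.ext_iff] at hn
    simp at hn
  · exfalso
    have : ((1 : ZMod p), t) ∈ lineMap p none := by
      rw [← h]; exact AddSubgroup.mem_zmultiples _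
    rw [lineMap, AddSubgroup.mem_zmultiples_iff] at this
    obtain ⟨n, hn⟩ := this
    rw [zsmul_pair, Prod.ext_iff] at hn
    simp at hn
  · have : ((1 : ZMod p), s) ∈ lineMap p (some t) := by
      rw [h]; exact AddSubgroup.mem_zmultiples _
    rw [key t s 0 this]

theorem lineMap_surj (H : AddSubgroup G) (hH : IsAtom H) : ∃ o, lineMap p o = H := by
  have hcard : Nat.card H = p := (atom_iff_card p H).mp hH
  obtain ⟨x, hxH, hx0⟩ :=
    (AddSubgroup.bot_or_exists_ne_zero H).resolve_left hH.1
  have hzle : AddSubgroup.zmultiples x ≤ H := AddSubgroup.zmultiples_le.mpr hxH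
  have hzH : AddSubgroup.zmultiples x = H :=
    AddSubgroup.eq_of_le_of_card_ge hzle (by rw [hcard, card_zmul p hx0])
  obtain ⟨a, b⟩ := x
  by_cases ha : a = 0
  · subst ha
    have hb : b ≠ 0 := fun h => hx0 (by simp [h, Prod.ext_iff])
    refine ⟨none, ?_⟩
    have hmem : ((0 : ZMod p), (1 : ZMod p)) ∈ H := by
      rw [← hzH, AddSubgroup.mem_zmultiples_iff]
      exact ⟨(b⁻¹.val : ℤ), by rw [zsmul_pair, cast_val_int, mul_zero,
        inv_mul_cancel₀ hb]⟩
    exact AddSubgroup.eq_of_le_of_card_ge (AddSubgroup.zmultiples_le.mpr hmem)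
      (by rw [hcard]
          show p ≤ Nat.card (AddSubgroup.zmultiples ((0 : ZMod p), (1 : ZMod p)))
          rw [card_zmul p (by simp [Prod.ext_iff])])
  · refine ⟨some (a⁻¹ * b), ?_⟩
    have hmem : ((1 : ZMod p), a⁻¹ * b) ∈ H := by
      rw [← hzH, AddSubgroup.mem_zmultiples_iff]
      exact ⟨(a⁻¹.val : ℤ), by rw [zsmul_pair, cast_val_int, inv_mul_cancel₀ ha]⟩
    exact AddSubgroup.eq_of_le_of_card_ge (AddSubgroup.zmultiples_le.mpr hmem)
      (by rw [hcard]
          show p ≤ Nat.card (AddSubgroup.zmultiples ((1 : ZMod p), a⁻¹ * b))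
          rw [card_zmul p (by simp [Prod.ext_iff])])

theorem card_atoms : Nat.card {H : AddSubgroup G // IsAtom H} = p + 1 := by
  have e : Option (ZMod p) ≃ {H : AddSubgroup G // IsAtom H} :=
    Equiv.ofBijective (fun o => ⟨lineMap p o, lineMap_atom p o⟩)
      ⟨fun o o' h => lineMap_inj p (congrArg Subtype.val h),
       fun ⟨H, hH⟩ => by
        obtain ⟨o, ho⟩ := lineMap_surj p H hH
        exact ⟨o, Subtype.ext ho⟩⟩
  rw [← Nat.card_congr e, Nat.card_eq_fintype_card, Fintype.card_option, ZMod.card]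

end Concrete

/-- for a prime p, the number of transfer systems on the
subgroup lattice of C_p × C_p = ZMod p × ZMod p (equivalently, of G-transfer
systems for G = C_p × C_p, since G is abelian) is exactly 2^{p+2} + p + 1. -/
theorem stmt19 (p : ℕ) (hp : p.Prime) :
    Nat.card (TransferSystem (AddSubgroup (ZMod p × ZMod p))) =
      2 ^ (p + 2) + p + 1 := by
  haveI := Fact.mk hp
  rw [count_height2 (hclass' p) (htop' p) (hbot' p), card_atoms p]
  ring
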